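/- Let w be a (μ+1)-biworld. If for every agent A the intersection A^w ∩ Ā^w is empty, then w is completed. -/

import Mathlib

open Ordinal

/-- Three truth values: true, false, unknown. -/
inductive TV : Type
  | t | f | u
deriving DecidableEq

namespace TV

/-- Inverse of a truth value. -/
def inv : TV → TV
  | t => f
  | f => t
  | u => u

/-- Binary greatest lower bound in the truth order f ≤ₜ u ≤ₜ t. -/
def tmin : TV → TV → TV
  | f, _ => f
  | _, f => f
  | u, _ => u
  | _, u => u
  | t, t => t

/-- Truth value of a proposition. -/
noncomputable def ofProp (p : Prop) : TV := by
  classical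
  exact if p then t else f

/-- Greatest lower bound of a set of truth values in the truth order f ≤ₜ u ≤ₜ t. -/
noncomputable def tglbSet (s : Set TV) : TV := by
  classical
  exact if f ∈ s then f else if u ∈ s then u else t

/-- Least upper bound of a (chain) set of truth values in the precision order
u ≤ₚ t, u ≤ₚ f. -/
noncomputable def plubSet (s : Set TV) : TV := by
  classical
  exact if t ∈ s then t else if f ∈ s then f else u

/-- Precision order on truth values: u below everything. -/
def ple (a b : TV) : Prop := a = u ∨ a = b

end TV

/-- Formulas of the language COEL. -/
inductive Form (Agent Atom : Type) : Type
  | atom : Atom → Form Agent Atom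
  | neg : Form Agent Atom → Form Agent Atom
  | and : Form Agent Atom → Form Agent Atom → Form Agent Atom
  | K : Agent → Form Agent Atom → Form Agent Atom
  | M : Agent → Form Agent Atom → Form Agent Atom
  | E : Set Agent → Form Agent Atom → Form Agent Atom
  | C : Set Agent → Form Agent Atom → Form Agent Atom

/-- Iterated `E_G` operator: `Eiter G 0 φ = φ`, `Eiter G (k+1) φ = E_G (Eiter G k φ)`. -/
def Form.Eiter {Agent Atom : Type} (G : Set Agent) : ℕ → Form Agent Atom → Form Agent Atom
  | 0, φ => φ
  | k + 1, φ => .E G (Form.Eiter G k φ)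

/-- Modal depth of a COEL formula. -/
noncomputable def Form.MD {Agent Atom : Type} : Form Agent Atom → Ordinal.{0}
  | .atom _ => 0
  | .neg φ => φ.MD
  | .and φ ψ => max φ.MD ψ.MD
  | .K _ φ => φ.MD + 1
  | .M _ φ => φ.MD + 1
  | .E _ φ => φ.MD + 1
  | .C _ φ => φ.MD + omega0

/-- A system of prebiworlds over agents `Agent` and propositional vocabulary `Atom`,
packaging the transfinite construction of μ-prebiworlds for all countable ordinals μ,
together with the recursive equations defining restriction. -/
structure PrebSys (Agent Atom : Type) where
  /-- the collection of all prebiworlds (of all depths) -/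
  W : Type 1
  /-- the depth of a prebiworld -/
  depth : W → Ordinal.{0}
  depth_countable : ∀ w, (depth w).card ≤ Cardinal.aleph0
  /-- the objective interpretation of a prebiworld -/
  obj : W → Set Atom
  /-- for a (μ+1)-prebiworld, the set A^w of μ-prebiworlds deemed (extendibly) possible -/
  poss : Agent → W → Set W
  /-- for a (μ+1)-prebiworld, the set Ā^w of μ-prebiworlds deemed (extendibly) impossible -/
  imposs : Agent → W → Set W
  /-- for a limit-depth prebiworld, its component (w)_α at α < depth w -/
  comp : W → Ordinal.{0} → W
  /-- the restriction w|_α of w to depth α ≤ depth w -/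
  restrict : W → Ordinal.{0} → W
  depth_poss : ∀ (A : Agent) (w v : W), v ∈ poss A w → depth w = depth v + 1
  depth_imposs : ∀ (A : Agent) (w v : W), v ∈ imposs A w → depth w = depth v + 1
  depth_comp : ∀ (w : W) (α : Ordinal.{0}), Order.IsSuccLimit (depth w) → α < depth w →
    depth (comp w α) = α
  comp_mono : ∀ (w : W) (α β : Ordinal.{0}), Order.IsSuccLimit (depth w) → α ≤ β → β < depth w →
    restrict (comp w β) α = comp w α
  ext_zero : ∀ w w' : W, depth w = 0 → depth w' = 0 → obj w = obj w' → w = w'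
  ext_succ : ∀ (w w' : W) (μ : Ordinal.{0}), depth w = μ + 1 → depth w' = μ + 1 →
    obj w = obj w' → (∀ A, poss A w = poss A w') → (∀ A, imposs A w = imposs A w') → w = w'
  ext_limit : ∀ w w' : W, Order.IsSuccLimit (depth w) → depth w' = depth w →
    (∀ α < depth w, comp w α = comp w' α) → w = w'
  depth_restrict : ∀ (w : W) (α : Ordinal.{0}), α ≤ depth w → depth (restrict w α) = α
  restrict_zero : ∀ w : W, obj (restrict w 0) = obj w
  restrict_limit : ∀ (w : W) (α β : Ordinal.{0}), Order.IsSuccLimit α → α ≤ depth w → β < α →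
    comp (restrict w α) β = restrict w β
  restrict_succ_limit : ∀ (w : W) (α : Ordinal.{0}), Order.IsSuccLimit (depth w) →
    α + 1 ≤ depth w → restrict w (α + 1) = comp w (α + 1)
  restrict_succ_obj : ∀ (w : W) (μ α : Ordinal.{0}), depth w = μ + 1 → α + 1 ≤ depth w →
    obj (restrict w (α + 1)) = obj w
  restrict_succ_poss : ∀ (w : W) (μ α : Ordinal.{0}) (A : Agent), depth w = μ + 1 →
    α + 1 ≤ depth w →
    poss A (restrict w (α + 1)) = (fun v => restrict v α) '' poss A w
  restrict_succ_imposs : ∀ (w : W) (μ α : Ordinal.{0}) (A : Agent), depth w = μ + 1 →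
    α + 1 ≤ depth w →
    imposs A (restrict w (α + 1)) = (fun v => restrict v α) '' imposs A w

/-- The precision order: v ≤ₚ w iff w restricted to the depth of v equals v. -/
def PrebSys.lep {Agent Atom : Type} (S : PrebSys Agent Atom) (v w : S.W) : Prop :=
  S.depth v ≤ S.depth w ∧ S.restrict w (S.depth v) = v

/-- A system of biworlds: prebiworlds together with the simultaneously
(transfinite-recursively) defined predicates `Biworld` and `Incompleted`
and their defining clauses. -/
structure BiSys (Agent Atom : Type) extends PrebSys Agent Atom where
  Biworld : W → Prop
  Incompleted : W → Prop
  biworld_zero : ∀ w : W, depth w = 0 → Biworld w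
  biworld_succ : ∀ (w : W) (μ : Ordinal.{0}), depth w = μ + 1 →
    (Biworld w ↔ ∀ A : Agent,
      poss A w ∪ imposs A w = {v | depth v = μ ∧ Biworld v} ∧
      ∀ v ∈ poss A w ∩ imposs A w, Incompleted v)
  biworld_limit : ∀ w : W, Order.IsSuccLimit (depth w) →
    (Biworld w ↔ ∀ α < depth w, Biworld (comp w α))
  incompleted_iff : ∀ w : W, Incompleted w ↔
    ∃ v₁ v₂ : W, v₁ ≠ v₂ ∧ Biworld v₁ ∧ Biworld v₂ ∧
      depth v₁ = depth w + 1 ∧ depth v₂ = depth w + 1 ∧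
      PrebSys.lep toPrebSys w v₁ ∧ PrebSys.lep toPrebSys w v₂

/-- A biworld is completed if it is not incompleted. -/
def BiSys.Completed {Agent Atom : Type} (S : BiSys Agent Atom) (w : S.W) : Prop :=
  ¬ S.Incompleted w

/-- For a limit-depth prebiworld w, the set A↑w. -/
def BiSys.upPoss {Agent Atom : Type} (S : BiSys Agent Atom) (A : Agent) (w : S.W) :
    Set S.W :=
  {v | S.depth v = S.depth w ∧ ∀ α < S.depth w, S.comp v α ∈ S.poss A (S.comp w (α + 1))}

/-- For a limit-depth prebiworld w, the set Ā↑w. -/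
def BiSys.upImposs {Agent Atom : Type} (S : BiSys Agent Atom) (A : Agent) (w : S.W) :
    Set S.W :=
  {v | S.depth v = S.depth w ∧ ∀ α < S.depth w, S.comp v α ∈ S.imposs A (S.comp w (α + 1))}

/-- A system of biworlds together with the three-valued valuation of COEL formulas
and its defining equations. -/
structure ValSys (Agent Atom : Type) extends BiSys Agent Atom where
  val : Form Agent Atom → W → TV
  val_atom : ∀ (P : Atom) (w : W), val (.atom P) w = TV.ofProp (P ∈ obj w)
  val_neg : ∀ (φ : Form Agent Atom) (w : W), val (.neg φ) w = (val φ w).inv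
  val_and : ∀ (φ ψ : Form Agent Atom) (w : W),
    val (.and φ ψ) w = (val φ w).tmin (val ψ w)
  val_K_zero : ∀ (A : Agent) (φ : Form Agent Atom) (w : W), depth w = 0 →
    val (.K A φ) w = TV.u
  val_K_succ : ∀ (A : Agent) (φ : Form Agent Atom) (w : W) (μ : Ordinal.{0}),
    depth w = μ + 1 → val (.K A φ) w = TV.tglbSet (val φ '' poss A w)
  val_K_limit : ∀ (A : Agent) (φ : Form Agent Atom) (w : W), Order.IsSuccLimit (depth w) →
    val (.K A φ) w = TV.plubSet {x | ∃ α < depth w, x = val (.K A φ) (comp w α)}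
  val_M_zero : ∀ (A : Agent) (φ : Form Agent Atom) (w : W), depth w = 0 →
    val (.M A φ) w = TV.u
  val_M_succ : ∀ (A : Agent) (φ : Form Agent Atom) (w : W) (μ : Ordinal.{0}),
    depth w = μ + 1 →
    val (.M A φ) w = TV.tglbSet ((fun v => (val φ v).inv) '' imposs A w)
  val_M_limit : ∀ (A : Agent) (φ : Form Agent Atom) (w : W), Order.IsSuccLimit (depth w) →
    val (.M A φ) w = TV.plubSet {x | ∃ α < depth w, x = val (.M A φ) (comp w α)}
  val_E : ∀ (G : Set Agent) (φ : Form Agent Atom) (w : W),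
    val (.E G φ) w = TV.tglbSet {x | ∃ A ∈ G, x = val (.K A φ) w}
  val_C : ∀ (G : Set Agent) (φ : Form Agent Atom) (w : W),
    val (.C G φ) w = TV.tglbSet {x | ∃ k : ℕ, 1 ≤ k ∧ x = val (Form.Eiter G k φ) w}

/-- A world: a completed (ω²+1)-biworld. -/
def ValSys.World {Agent Atom : Type} (S : ValSys Agent Atom) (w : S.W) : Prop :=
  S.Biworld w ∧ S.depth w = omega0 ^ 2 + 1 ∧ S.toBiSys.Completed w

/-- Accessibility in the canonical Kripke structure K*: w R_A w' iff w'|_{ω²} ∈ A^w. -/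
def ValSys.Racc {Agent Atom : Type} (S : ValSys Agent Atom) (A : Agent)
    (w w' : S.W) : Prop :=
  S.restrict w' (omega0 ^ 2) ∈ S.poss A w

/-- Two-valued Kripke valuation on the canonical Kripke structure K* of worlds. -/
def ValSys.kval {Agent Atom : Type} (S : ValSys Agent Atom) :
    Form Agent Atom → S.W → Prop
  | .atom P, w => P ∈ S.obj w
  | .neg φ, w => ¬ S.kval φ w
  | .and φ ψ, w => S.kval φ w ∧ S.kval ψ w
  | .K A φ, w => ∀ w', S.World w' → S.Racc A w w' → S.kval φ w'
  | .M A φ, w => ∀ w', S.World w' → S.kval φ w' → S.Racc A w w'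
  | .E G φ, w => ∀ A ∈ G, ∀ w', S.World w' → S.Racc A w w' → S.kval φ w'
  | .C G φ, w => ∀ w', Relation.TransGen (fun x y => S.World y ∧ ∃ A ∈ G, S.Racc A x y) w w' →
      S.kval φ w'

/-- a (μ+1)-biworld with A^w ∩ Ā^w = ∅ for every agent is completed. -/
theorem completed_of_inter_empty {Agent Atom : Type} (S : BiSys Agent Atom) (w : S.W)
    (μ : Ordinal.{0}) (hd : S.depth w = μ + 1) (hb : S.Biworld w)
    (h : ∀ A : Agent, S.poss A w ∩ S.imposs A w = ∅) :
    S.Completed w := by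
  intro hinc
  obtain ⟨v₁, v₂, hne, hb₁, hb₂, hd₁, hd₂, hl₁, hl₂⟩ := (S.incompleted_iff w).mp hinc
  rw [hd] at hd₁ hd₂
  have hr₁ : S.restrict v₁ (μ + 1) = w := by have := hl₁.2; rwa [hd] at this
  have hr₂ : S.restrict v₂ (μ + 1) = w := by have := hl₂.2; rwa [hd] at this
  have key : ∀ x y : S.W, S.depth x = (μ + 1) + 1 → S.depth y = (μ + 1) + 1 →
      S.Biworld x → S.Biworld y → S.restrict x (μ + 1) = w → S.restrict y (μ + 1) = w →
      ∀ A : Agent, S.poss A x ⊆ S.poss A y ∧ S.imposs A x ⊆ S.imposs A y := by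
    intro x y hdx hdy hbx hby hrx hry A
    have hlex : μ + 1 ≤ S.depth x := by rw [hdx]; exact le_self_add
    have hley : μ + 1 ≤ S.depth y := by rw [hdy]; exact le_self_add
    have hpx : S.poss A w = (fun v => S.restrict v μ) '' S.poss A x := by
      rw [← hrx]; exact S.restrict_succ_poss x (μ + 1) μ A hdx hlex
    have hix : S.imposs A w = (fun v => S.restrict v μ) '' S.imposs A x := by
      rw [← hrx]; exact S.restrict_succ_imposs x (μ + 1) μ A hdx hlex
    have hpy : S.poss A w = (fun v => S.restrict v μ) '' S.poss A y := by
      rw [← hry]; exact S.restrict_succ_poss y (μ + 1) μ A hdy hley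
    have hiy : S.imposs A w = (fun v => S.restrict v μ) '' S.imposs A y := by
      rw [← hry]; exact S.restrict_succ_imposs y (μ + 1) μ A hdy hley
    have hux := ((S.biworld_succ x (μ + 1) hdx).mp hbx A).1
    have huy := ((S.biworld_succ y (μ + 1) hdy).mp hby A).1
    constructor
    · intro u hu
      have hmem : u ∈ S.poss A y ∪ S.imposs A y := by
        rw [huy, ← hux]; exact Or.inl hu
      rcases hmem with hm | hm
      · exact hm
      · exfalso
        have h1 : S.restrict u μ ∈ S.poss A w := by rw [hpx]; exact ⟨u, hu, rfl⟩
        have h2 : S.restrict u μ ∈ S.imposs A w := by rw [hiy]; exact ⟨u, hm, rfl⟩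
        have : S.restrict u μ ∈ S.poss A w ∩ S.imposs A w := ⟨h1, h2⟩
        rw [h A] at this; exact this
    · intro u hu
      have hmem : u ∈ S.poss A y ∪ S.imposs A y := by
        rw [huy, ← hux]; exact Or.inr hu
      rcases hmem with hm | hm
      · exfalso
        have h1 : S.restrict u μ ∈ S.poss A w := by rw [hpy]; exact ⟨u, hm, rfl⟩
        have h2 : S.restrict u μ ∈ S.imposs A w := by rw [hix]; exact ⟨u, hu, rfl⟩
        have : S.restrict u μ ∈ S.poss A w ∩ S.imposs A w := ⟨h1, h2⟩
        rw [h A] at this; exact this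
      · exact hm
  have hle₁ : μ + 1 ≤ S.depth v₁ := by rw [hd₁]; exact le_self_add
  have hle₂ : μ + 1 ≤ S.depth v₂ := by rw [hd₂]; exact le_self_add
  have hobj : S.obj v₁ = S.obj v₂ := by
    have h1 := S.restrict_succ_obj v₁ (μ + 1) μ hd₁ hle₁
    have h2 := S.restrict_succ_obj v₂ (μ + 1) μ hd₂ hle₂
    rw [hr₁] at h1; rw [hr₂] at h2; rw [← h1, h2]
  apply hne
  refine S.ext_succ v₁ v₂ (μ + 1) hd₁ hd₂ hobj ?_ ?_
  · intro A
    exact le_antisymm ((key v₁ v₂ hd₁ hd₂ hb₁ hb₂ hr₁ hr₂ A).1)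
      ((key v₂ v₁ hd₂ hd₁ hb₂ hb₁ hr₂ hr₁ A).1)
  · intro A
    exact le_antisymm ((key v₁ v₂ hd₁ hd₂ hb₁ hb₂ hr₁ hr₂ A).2)
      ((key v₂ v₁ hd₂ hd₁ hb₂ hb₁ hr₂ hr₁ A).2)
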